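/- For every ς ∈ Ĝ∖G, the twisted Frobenius–Schur element is p^ς-invariant: p^ς(ν) = ν. -/

import Mathlib

/-- Orientation-twisted loop transgression coefficient. -/
noncomputable def taurefl {Ghat : Type*} [Group Ghat] (π : Ghat →* ℤˣ)
    (θ : Ghat → Ghat → ℂ) (ω g : Ghat) : ℂ :=
  θ g⁻¹ g ^ ((((π ω : ℤˣ) : ℤ) - 1) / 2) *
    (θ (ω * g ^ ((π ω : ℤˣ) : ℤ) * ω⁻¹) ω / θ ω (g ^ ((π ω : ℤˣ) : ℤ)))

/-- The basis element `l_g` of the twisted group algebra `ℂ^{θ⁻¹}[G]`, whose elements are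
modelled as functions `Ĝ → ℂ` supported on `G = ker π`. -/
def ellG {Ghat : Type*} [DecidableEq Ghat] (g : Ghat) : Ghat → ℂ :=
  fun h => if h = g then 1 else 0

/-- Multiplication of `ℂ^{θ⁻¹}[G]` (determined by `l_g ⬝ l_h = θ(g,h)⁻¹ l_{gh}`) on
functions `Ĝ → ℂ` supported on `G = ker π`. -/
noncomputable def convG {Ghat : Type*} [Group Ghat] [Fintype Ghat] [DecidableEq Ghat]
    (π : Ghat →* ℤˣ) (θ : Ghat → Ghat → ℂ) (a b : Ghat → ℂ) : Ghat → ℂ :=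
  fun k => ∑ g ∈ Finset.univ.filter (fun g : Ghat => π g = 1),
    (θ g (g⁻¹ * k))⁻¹ * a g * b (g⁻¹ * k)

/-- Elements of `ℂ^{θ⁻¹}[G]` are supported on `G = ker π`. -/
def SupportedG {Ghat : Type*} [Group Ghat] (π : Ghat →* ℤˣ) (a : Ghat → ℂ) : Prop :=
  ∀ k : Ghat, π k ≠ 1 → a k = 0

/-- The (anti)automorphism `p^ω` of `ℂ^{θ⁻¹}[G]`, determined by
`p^ω(l_g) = λ(g)^{(π(ω)-1)/2} τ^refl(θ)([ω]g) l_{ωg^{π(ω)}ω⁻¹}`. -/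
noncomputable def pmapG {Ghat : Type*} [Group Ghat] (π : Ghat →* ℤˣ)
    (θ : Ghat → Ghat → ℂ) (lam : Ghat →* ℂ) (ω : Ghat) (a : Ghat → ℂ) : Ghat → ℂ :=
  fun k =>
    lam ((ω⁻¹ * k * ω) ^ ((π ω : ℤˣ) : ℤ)) ^ ((((π ω : ℤˣ) : ℤ) - 1) / 2) *
      taurefl π θ ω ((ω⁻¹ * k * ω) ^ ((π ω : ℤˣ) : ℤ)) *
        a ((ω⁻¹ * k * ω) ^ ((π ω : ℤˣ) : ℤ))

/-- Membership in the centre `Z(ℂ^{θ⁻¹}[G])`: supported on `G` and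
`a_{hgh⁻¹} = τ(θ)([h]g) a_g`. -/
def IsCentralG {Ghat : Type*} [Group Ghat] (π : Ghat →* ℤˣ)
    (θ : Ghat → Ghat → ℂ) (a : Ghat → ℂ) : Prop :=
  SupportedG π a ∧
    ∀ g h : Ghat, π g = 1 → π h = 1 →
      a (h * g * h⁻¹) = (θ (h * g * h⁻¹) h / θ h g) * a g

/-- The twisted Frobenius–Schur element `ν = Σ_{ς ∈ Ĝ∖G} (λ(ς)/θ(ς,ς)) l_{ς²}`, as a
function on `Ĝ`. -/
noncomputable def nuG {Ghat : Type*} [Group Ghat] [Fintype Ghat] [DecidableEq Ghat]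
    (π : Ghat →* ℤˣ) (θ : Ghat → Ghat → ℂ) (lam : Ghat →* ℂ) : Ghat → ℂ :=
  fun g => ∑ μ ∈ Finset.univ.filter (fun μ : Ghat => π μ = -1 ∧ μ ^ 2 = g),
    lam μ / θ μ μ

/-- Proposition 3.8 of the paper. For every `ς ∈ Ĝ∖G`, the twisted
Frobenius–Schur element is `p^ς`-invariant: `p^ς(ν) = ν`. -/
theorem stmt13 {Ghat : Type*} [Group Ghat] [Fintype Ghat] [DecidableEq Ghat]
    (π : Ghat →* ℤˣ) (hπ : Function.Surjective π)
    (θ : Ghat → Ghat → ℂ)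
    (hnorm : ∀ a b : Ghat, ‖θ a b‖ = 1)
    (hθe : ∀ ω : Ghat, θ ω 1 = 1) (hθe' : ∀ ω : Ghat, θ 1 ω = 1)
    (hcoc : ∀ ω₃ ω₂ ω₁ : Ghat, θ ω₃ ω₂ * θ (ω₃ * ω₂) ω₁ =
      θ ω₂ ω₁ ^ ((π ω₃ : ℤˣ) : ℤ) * θ ω₃ (ω₂ * ω₁))
    (lam : Ghat →* ℂ) (hlam : ∀ ω : Ghat, ‖lam ω‖ = 1)
    (ς : Ghat) (hς : π ς = -1) :
    pmapG π θ lam ς (nuG π θ lam) = nuG π θ lam := by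
  
  have hθne : ∀ a b : Ghat, θ a b ≠ 0 := by
    intro a b h; have := hnorm a b; rw [h, norm_zero] at this; norm_num at this
  have hlamne : ∀ ω : Ghat, lam ω ≠ 0 := by
    intro ω h; have := hlam ω; rw [h, norm_zero] at this; norm_num at this
  have hς' : ((π ς : ℤˣ) : ℤ) = -1 := by rw [hς]; rfl
  -- key cocycle identity
  have key : ∀ μ : Ghat, π μ = -1 →
      θ (ς*μ⁻¹*ς⁻¹) (ς*μ⁻¹*ς⁻¹) * θ ((ς*μ⁻¹*ς⁻¹)*(ς*μ⁻¹*ς⁻¹)) ς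
        = θ (μ⁻¹*μ⁻¹) (μ*μ) * θ ς (μ⁻¹*μ⁻¹) * θ μ μ := by
    intro μ hμ
    set ρ := ς*μ⁻¹*ς⁻¹ with hρ
    have hπρ' : ((π ρ : ℤˣ) : ℤ) = -1 := by
      rw [hρ, map_mul, map_mul, map_inv, map_inv, hς, hμ]; decide
    have hπμ' : ((π μ⁻¹ : ℤˣ) : ℤ) = -1 := by rw [map_inv, hμ]; decide
    have hρς : ρ * ς = ς * μ⁻¹ := by rw [hρ]; group
    have hA : θ ρ ρ * θ (ρ*ρ) ς = (θ ρ ς)⁻¹ * θ ρ (ρ*ς) := by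
      have h := hcoc ρ ρ ς; rwa [hπρ', zpow_neg_one] at h
    have hB : θ ρ ς * θ (ς*μ⁻¹) μ⁻¹ = (θ ς μ⁻¹)⁻¹ * θ ρ (ς*μ⁻¹) := by
      have h := hcoc ρ ς μ⁻¹; rwa [hπρ', zpow_neg_one, hρς] at h
    have hC : θ ς μ⁻¹ * θ (ς*μ⁻¹) μ⁻¹ = (θ μ⁻¹ μ⁻¹)⁻¹ * θ ς (μ⁻¹*μ⁻¹) := by
      have h := hcoc ς μ⁻¹ μ⁻¹; rwa [hς', zpow_neg_one] at h
    have hE : θ μ⁻¹ μ = (θ μ μ)⁻¹ * θ μ⁻¹ (μ*μ) := by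
      have h := hcoc μ⁻¹ μ μ
      rwa [hπμ', zpow_neg_one, inv_mul_cancel, hθe', mul_one] at h
    have hD : θ μ⁻¹ μ⁻¹ * θ (μ⁻¹*μ⁻¹) (μ*μ) = (θ μ μ)⁻¹ := by
      have h := hcoc μ⁻¹ μ⁻¹ (μ*μ)
      rw [hπμ', zpow_neg_one, show μ⁻¹*(μ*μ) = μ by group, hE] at h
      rw [h, mul_comm ((θ μ μ)⁻¹), ← mul_assoc, inv_mul_cancel₀ (hθne μ⁻¹ (μ*μ)), one_mul]
    have hDE : (θ μ⁻¹ μ⁻¹)⁻¹ = θ (μ⁻¹*μ⁻¹) (μ*μ) * θ μ μ := by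
      have h1 : θ μ⁻¹ μ⁻¹ * (θ (μ⁻¹*μ⁻¹) (μ*μ) * θ μ μ) = 1 := by
        rw [← mul_assoc, hD, inv_mul_cancel₀ (hθne μ μ)]
      exact (eq_inv_of_mul_eq_one_right h1).symm
    have hB' : θ ς μ⁻¹ * (θ ρ ς * θ (ς*μ⁻¹) μ⁻¹) = θ ρ (ς*μ⁻¹) := by
      rw [hB, mul_inv_cancel_left₀ (hθne ς μ⁻¹)]
    calc θ ρ ρ * θ (ρ*ρ) ς
        = (θ ρ ς)⁻¹ * θ ρ (ρ*ς) := hA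
      _ = θ ς μ⁻¹ * θ (ς*μ⁻¹) μ⁻¹ := by
          rw [hρς, ← hB']
          apply mul_left_cancel₀ (hθne ρ ς)
          rw [mul_inv_cancel_left₀ (hθne ρ ς)]; ring
      _ = (θ μ⁻¹ μ⁻¹)⁻¹ * θ ς (μ⁻¹*μ⁻¹) := hC
      _ = θ (μ⁻¹*μ⁻¹) (μ*μ) * θ μ μ * θ ς (μ⁻¹*μ⁻¹) := by rw [hDE]
      _ = θ (μ⁻¹*μ⁻¹) (μ*μ) * θ ς (μ⁻¹*μ⁻¹) * θ μ μ := by ring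
  funext k
  simp only [pmapG, taurefl, nuG, hς', zpow_neg_one, show ((-1:ℤ)-1)/2 = -1 by decide]
  rw [Finset.mul_sum]
  refine Finset.sum_nbij' (i := fun μ => ς * μ⁻¹ * ς⁻¹) (j := fun ρ => ς⁻¹ * ρ⁻¹ * ς)
    ?_ ?_ ?_ ?_ ?_
  · intro μ hμ
    simp only [Finset.mem_filter, Finset.mem_univ, true_and] at hμ ⊢
    obtain ⟨h1, h2⟩ := hμ
    constructor
    · rw [map_mul, map_mul, map_inv, map_inv, hς, h1]; decide
    · have h3 : (ς * μ⁻¹ * ς⁻¹)^2 = ς * (μ^2)⁻¹ * ς⁻¹ := by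
        simp [pow_two, mul_inv_rev, mul_assoc]
      rw [h3, h2, inv_inv]
      simp [mul_assoc]
  · intro ρ hρ
    simp only [Finset.mem_filter, Finset.mem_univ, true_and] at hρ ⊢
    obtain ⟨h1, h2⟩ := hρ
    constructor
    · rw [map_mul, map_mul, map_inv, map_inv, hς, h1]; decide
    · have h3 : (ς⁻¹ * ρ⁻¹ * ς)^2 = ς⁻¹ * (ρ^2)⁻¹ * ς := by
        simp [pow_two, mul_inv_rev, mul_assoc]
      rw [h3, h2, mul_inv_rev, mul_inv_rev, inv_inv]
      simp [mul_assoc]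
  · intro μ _; group
  · intro ρ _; group
  · intro μ hμ
    simp only [Finset.mem_filter, Finset.mem_univ, true_and] at hμ
    obtain ⟨h1, h2⟩ := hμ
    have hk : ς⁻¹ * k * ς = (μ*μ)⁻¹ := by
      rw [← pow_two, ← inv_inv (ς⁻¹ * k * ς), ← h2]
    rw [hk]
    have hkey := key μ h1
    have e1 : ς * (μ⁻¹ * μ⁻¹) * ς⁻¹ = (ς*μ⁻¹*ς⁻¹) * (ς*μ⁻¹*ς⁻¹) := by
      simp [mul_assoc]
    simp only [inv_inv, mul_inv_rev, map_mul, map_inv]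
    rw [e1]
    field_simp [hθne, hlamne] at hkey ⊢
    linear_combination hkey
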